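/- For all reals a and b with a > 1/2 and b > 0, the digamma function satisfies ψ(a) − ψ(b) ≥ log((a − 1/2)/b), i.e. ψ(a) − ψ(b) ≥ log(a/b − 1/(2b)). -/

import Mathlib

open Real Set

lemma diffLG {x : ℝ} (hx : 0 < x) :
    DifferentiableAt ℝ (fun y : ℝ => Real.log (Real.Gamma y)) x := by
  refine DifferentiableAt.log (Real.differentiableAt_Gamma ?_)
    (Real.Gamma_pos_of_pos hx).ne'
  intro m
  have : (0:ℝ) ≤ m := Nat.cast_nonneg m
  intro h; rw [h] at hx; linarith

/-- The digamma function: derivative of `log ∘ Γ` on the reals. -/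
noncomputable def digamma (x : ℝ) : ℝ := deriv (fun y : ℝ => Real.log (Real.Gamma y)) x

lemma slope_log_Gamma {x : ℝ} (hx : 0 < x) :
    slope (fun y : ℝ => Real.log (Real.Gamma y)) x (x + 1) = Real.log x := by
  rw [slope_def_field]
  rw [Real.Gamma_add_one hx.ne', Real.log_mul hx.ne' (Real.Gamma_pos_of_pos hx).ne']
  ring

lemma digamma_le_log {x : ℝ} (hx : 0 < x) : digamma x ≤ Real.log x := by
  have h := Real.convexOn_log_Gamma.deriv_le_slope (mem_Ioi.2 hx)
    (mem_Ioi.2 (by linarith : (0:ℝ) < x + 1)) (by linarith) (diffLG hx)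
  rw [show (Real.log ∘ Real.Gamma) = fun y : ℝ => Real.log (Real.Gamma y) from rfl] at h
  rwa [slope_log_Gamma hx] at h

lemma log_le_digamma_add_one {x : ℝ} (hx : 0 < x) : Real.log x ≤ digamma (x + 1) := by
  have h := Real.convexOn_log_Gamma.slope_le_deriv (mem_Ioi.2 hx)
    (mem_Ioi.2 (by linarith : (0:ℝ) < x + 1)) (by linarith) (diffLG (by linarith))
  rw [show (Real.log ∘ Real.Gamma) = fun y : ℝ => Real.log (Real.Gamma y) from rfl] at h
  rwa [slope_log_Gamma hx] at h

lemma digamma_add_one {x : ℝ} (hx : 0 < x) : digamma (x + 1) = digamma x + 1 / x := by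
  have h1 : digamma (x + 1)
      = deriv (fun y : ℝ => Real.log (Real.Gamma (y + 1))) x := by
    rw [digamma, ← deriv_comp_add_const]
  rw [h1]
  have heq : (fun y : ℝ => Real.log (Real.Gamma (y + 1)))
      =ᶠ[nhds x] fun y : ℝ => Real.log y + Real.log (Real.Gamma y) := by
    filter_upwards [eventually_gt_nhds hx] with y hy
    rw [Real.Gamma_add_one hy.ne', Real.log_mul hy.ne' (Real.Gamma_pos_of_pos hy).ne']
  rw [heq.deriv_eq]
  have hd : HasDerivAt (fun y : ℝ => Real.log y + Real.log (Real.Gamma y))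
      (1 / x + digamma x) x := by
    have := (Real.hasDerivAt_log hx.ne').add (diffLG hx).hasDerivAt
    simp only [digamma, one_div]; exact this
  rw [hd.deriv]; ring

lemma log_ratio {s : ℝ} (h0 : 0 ≤ s) (h1 : s < 1) :
    2 * s ≤ Real.log (1 + s) - Real.log (1 - s) := by
  set g : ℝ → ℝ := fun t => Real.log (1 + t) - Real.log (1 - t) - 2 * t with hg
  have hder : ∀ t ∈ Ico (0:ℝ) 1, HasDerivAt g (1 / (1 + t) + 1 / (1 - t) - 2) t := by
    intro t ht
    have h1t : (0:ℝ) < 1 - t := by linarith [ht.2]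
    have h2t : (0:ℝ) < 1 + t := by linarith [ht.1]
    have d1 : HasDerivAt (fun t : ℝ => Real.log (1 + t)) (1 / (1 + t)) t := by
      have := (Real.hasDerivAt_log h2t.ne').comp t
        ((hasDerivAt_id t).const_add 1)
      simp at this
      rw [one_div]; exact this
    have d2 : HasDerivAt (fun t : ℝ => Real.log (1 - t)) (-(1 / (1 - t))) t := by
      have := (Real.hasDerivAt_log h1t.ne').comp t
        ((hasDerivAt_id t).const_sub 1)
      field_simp at this ⊢
      exact this
    have d3 : HasDerivAt (fun t : ℝ => 2 * t) 2 t := by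
      simpa using (hasDerivAt_id t).const_mul 2
    have := (d1.sub d2).sub d3
    exact this.congr_deriv (by ring)
  have hmono : MonotoneOn g (Ico (0:ℝ) 1) := by
    apply monotoneOn_of_deriv_nonneg (convex_Ico 0 1)
    · exact fun t ht => ((hder t ht).continuousAt).continuousWithinAt
    · intro t ht
      rw [interior_Ico] at ht
      exact ((hder t ⟨ht.1.le, ht.2⟩).differentiableAt).differentiableWithinAt
    · intro t ht
      rw [interior_Ico] at ht
      rw [(hder t ⟨ht.1.le, ht.2⟩).deriv]
      have h1t : (0:ℝ) < 1 - t := by linarith [ht.2]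
      have h2t : (0:ℝ) < 1 + t := by linarith [ht.1]
      have e1 : 1 - t ≤ 1 / (1 + t) := by
        rw [le_div_iff₀ h2t]; nlinarith [sq_nonneg t]
      have e2 : 1 + t ≤ 1 / (1 - t) := by
        rw [le_div_iff₀ h1t]; nlinarith [sq_nonneg t]
      linarith
  have := hmono (left_mem_Ico.2 one_pos) ⟨h0, h1⟩ h0
  simp [hg] at this
  linarith

lemma inv_le_log_sub {x : ℝ} (hx : 1 / 2 < x) :
    1 / x ≤ Real.log (x + 1 / 2) - Real.log (x - 1 / 2) := by
  have hx0 : (0:ℝ) < x := by linarith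
  have hs0 : (0:ℝ) ≤ 1 / (2 * x) := by positivity
  have hs1 : 1 / (2 * x) < 1 := by
    rw [div_lt_one (by linarith)]; linarith
  have h := log_ratio hs0 hs1
  have e1 : 1 + 1 / (2 * x) = (x + 1 / 2) / x := by field_simp
  have e2 : 1 - 1 / (2 * x) = (x - 1 / 2) / x := by field_simp
  rw [e1, e2, Real.log_div (by linarith) hx0.ne', Real.log_div (by linarith) hx0.ne'] at h
  have : 2 * (1 / (2 * x)) = 1 / x := by field_simp
  rw [this] at h
  linarith

lemma digamma_ge_log_sub_half {a : ℝ} (ha : 1 / 2 < a) :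
    Real.log (a - 1 / 2) ≤ digamma a := by
  have ha0 : (0:ℝ) < a := by linarith
  -- step : for all n, digamma a - log(a - 1/2) ≥ digamma (a+n) - log (a+n-1/2)
  have step : ∀ n : ℕ, digamma (a + n) - Real.log (a + n - 1 / 2)
      ≤ digamma a - Real.log (a - 1 / 2) := by
    intro n
    induction n with
    | zero => simp
    | succ n ih =>
      refine le_trans ?_ ih
      have hx : 1 / 2 < a + n := by
        have : (0:ℝ) ≤ n := Nat.cast_nonneg n
        linarith
      have h1 := digamma_add_one (x := a + n) (by linarith)
      have h2 := inv_le_log_sub hx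
      have e : a + (n + 1 : ℕ) = (a + n) + 1 := by push_cast; ring
      rw [e, h1]
      have e2 : (a + n) + 1 - 1 / 2 = (a + n) + 1 / 2 := by ring
      rw [e2]
      have e3 : a + n - 1/2 = a + (n:ℝ) - 1/2 := by ring
      linarith
  by_contra hc
  push_neg at hc
  set c := digamma a - Real.log (a - 1 / 2) with hcdef
  have hcneg : c < 0 := by simp [hcdef]; linarith
  obtain ⟨n, hn⟩ := exists_nat_gt (max 1 (1 - a + 1 / (-2 * c)))
  have hn1 : (1:ℝ) ≤ n := le_of_lt (lt_of_le_of_lt (le_max_left _ _) hn)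
  have hn2 : 1 - a + 1 / (-2 * c) < n := lt_of_le_of_lt (le_max_right _ _) hn
  -- lower bound for digamma (a+n)
  have hy : (0:ℝ) < a + n - 1 := by linarith
  have hlow : Real.log (a + n - 1) ≤ digamma (a + n) := by
    have := log_le_digamma_add_one hy
    rwa [show a + n - 1 + 1 = a + n by ring] at this
  have hupp : Real.log (a + n - 1 / 2) - Real.log (a + n - 1) ≤ (1/2) / (a + n - 1) := by
    have h := Real.log_le_sub_one_of_pos
      (show (0:ℝ) < (a + n - 1 / 2) / (a + n - 1) from div_pos (by linarith) hy)
    rw [Real.log_div (by linarith) hy.ne'] at h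
    have : (a + n - 1 / 2) / (a + n - 1) - 1 = (1/2) / (a + n - 1) := by
      field_simp; ring
    linarith
  have hstep := step n
  -- so c ≥ digamma (a+n) - log(a+n-1/2) ≥ -(1/2)/(a+n-1)
  have hge : -((1/2) / (a + n - 1)) ≤ c := by
    linarith [hstep, hlow, hupp]
  have h2c : (0:ℝ) < -2 * c := by linarith
  have hlt : 1 / (-2 * c) < a + n - 1 := by linarith
  have hcontra : (1/2) / (a + n - 1) < -c := by
    have hd := div_lt_div_of_pos_left (by norm_num : (0:ℝ) < 1/2) (by positivity) hlt
    have hc0 : c ≠ 0 := hcneg.ne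
    have he : (1/2 : ℝ) / (1 / (-2 * c)) = -c := by
      field_simp
    rwa [he] at hd
  linarith

/-- For `a > 1/2` and `b > 0`, `ψ(a) − ψ(b) ≥ log ((a − 1/2)/b)`. -/
theorem digamma_sub_digamma_ge (a b : ℝ) (ha : 1 / 2 < a) (hb : 0 < b) :
    digamma a - digamma b ≥ Real.log ((a - 1 / 2) / b) := by
  have h1 := digamma_ge_log_sub_half ha
  have h2 := digamma_le_log hb
  rw [ge_iff_le, Real.log_div (by linarith) hb.ne']
  linarith
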